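/- Let x be an n×n real symmetric matrix each of whose rows sums to zero (for instance the response matrix of an electrical network). Then the 2n×2n matrix Λ_{2n} is invertible and Ω(x)·Λ_{2n}⁻¹·Ω(x)ᵀ = 0; that is, the row space of Ω(x) is isotropic with respect to the skew-symmetric form Λ_{2n}⁻¹. -/

import Mathlib

open Matrix
set_option maxHeartbeats 1600000

noncomputable section

/-- The matrix `x` defined from `S` by `x_{ij} = S_{j,i} - S_{j,i-1}` (second index cyclic,
with the convention `S_{j,0} = S_{j,n}`); everything is written 0-indexed. -/
def xOf (n : ℕ) (S : Matrix (Fin n) (Fin n) ℝ) : Matrix (Fin n) (Fin n) ℝ :=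
  fun a b =>
    S b a - S b (if a.val = 0 then ⟨n - 1, by have := b.isLt; omega⟩
                 else ⟨a.val - 1, by have := a.isLt; omega⟩)

/-- The `n × 2n` matrix `Ω(x)` (0-indexed reformulation of the 1-indexed description):
`Ω(x)[i,2j-1] = (-1)^{i+j} x_{ij}`, `Ω(x)[1,2] = 1`, `Ω(x)[1,2n] = (-1)^n`,
`Ω(x)[i,2i-2] = Ω(x)[i,2i] = 1` for `2 ≤ i ≤ n`, all other even-column entries `0`. -/
def OmegaMat (n : ℕ) (x : Matrix (Fin n) (Fin n) ℝ) : Matrix (Fin n) (Fin (2 * n)) ℝ :=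
  fun r c =>
    if c.val % 2 = 0 then
      (-1 : ℝ) ^ (r.val + c.val / 2) * x r ⟨c.val / 2, by have := c.isLt; omega⟩
    else if r.val = 0 then
      (if c.val = 1 then (1 : ℝ) else if c.val = 2 * n - 1 then (-1 : ℝ) ^ n else 0)
    else
      (if c.val = 2 * r.val - 1 ∨ c.val = 2 * r.val + 1 then (1 : ℝ) else 0)

/-- The `(n+1) × 2n` matrix `M(S)`: first row `(0,1,0,1,…,0,1)`; row `i+1` has a `1` in
column `2i-1`, entries `S_{ij}` in the even columns `2j`, and `0` elsewhere. -/
def MMat (n : ℕ) (S : Matrix (Fin n) (Fin n) ℝ) : Matrix (Fin (n + 1)) (Fin (2 * n)) ℝ :=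
  fun r c =>
    if r.val = 0 then (if c.val % 2 = 1 then (1 : ℝ) else 0)
    else if c.val % 2 = 1 then
      S ⟨r.val - 1, by have := r.isLt; have := c.isLt; omega⟩
        ⟨c.val / 2, by have := c.isLt; omega⟩
    else if c.val + 2 = 2 * r.val then 1 else 0

/-- `D = diag(1,1,-1,-1,1,1,…)`. -/
def Dmat (n : ℕ) : Matrix (Fin (2 * n)) (Fin (2 * n)) ℝ :=
  Matrix.diagonal fun k => (-1 : ℝ) ^ (k.val / 2)

/-- `D̃ = diag(-1,1,-1,1,…)`, i.e. `D̃[k,k] = (-1)^k` (1-indexed). -/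
def Dtil (n : ℕ) : Matrix (Fin (2 * n)) (Fin (2 * n)) ℝ :=
  Matrix.diagonal fun k => (-1 : ℝ) ^ (k.val + 1)

/-- The `2n × 2n` skew-symmetric tridiagonal matrix `Λ_{2n}` with
`Λ[i,i+1] = (-1)^{i+1}` and `Λ[i+1,i] = (-1)^i` (1-indexed). -/
def LambdaMat (n : ℕ) : Matrix (Fin (2 * n)) (Fin (2 * n)) ℝ :=
  fun a b =>
    if b.val = a.val + 1 then (-1 : ℝ) ^ a.val
    else if a.val = b.val + 1 then (-1 : ℝ) ^ (b.val + 1)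
    else 0

end

open Finset in
private lemma negOnePow' (a : ℕ) : (-1:ℝ)^a = if a % 2 = 0 then 1 else -1 := by
  conv_lhs => rw [← Nat.div_add_mod a 2]
  rw [pow_add, pow_mul]
  norm_num
  rcases Nat.mod_two_eq_zero_or_one a with h | h <;> simp [h]

private lemma sum_range_two_mul' (g : ℕ → ℝ) : ∀ m, ∑ j ∈ Finset.range (2*m), g j
    = ∑ j ∈ Finset.range m, (g (2*j) + g (2*j+1))
  | 0 => by simp
  | (m+1) => by
    have h : 2*(m+1) = (2*m+1)+1 := by ring
    rw [h, Finset.sum_range_succ, Finset.sum_range_succ, sum_range_two_mul' g m,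
      Finset.sum_range_succ]
    ring

private lemma sum_fin_two_mul' (n : ℕ) (f : Fin (2*n) → ℝ) :
    ∑ c, f c = ∑ a : Fin n, (f ⟨2*a.val, by omega⟩ + f ⟨2*a.val+1, by omega⟩) := by
  set g : ℕ → ℝ := fun j => if h : j < 2*n then f ⟨j, h⟩ else 0 with hg
  have h1 : ∑ c, f c = ∑ j ∈ Finset.range (2*n), g j := by
    rw [← Fin.sum_univ_eq_sum_range]
    exact Finset.sum_congr rfl fun c _ => by simp [hg, c.isLt]
  have h3 : ∑ a : Fin n, (f ⟨2*a.val, by omega⟩ + f ⟨2*a.val+1, by omega⟩)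
      = ∑ j ∈ Finset.range n, (g (2*j) + g (2*j+1)) := by
    rw [← Fin.sum_univ_eq_sum_range]
    refine Finset.sum_congr rfl fun a _ => ?_
    have h1 : 2*a.val < 2*n := by omega
    have h2 : 2*a.val+1 < 2*n := by omega
    simp [hg, h1, h2]
  rw [h1, h3, sum_range_two_mul']

private lemma sum_two_point' {N : ℕ} (F : Fin N → ℝ) (b0 b1 : Fin N) (hne : b0 ≠ b1)
    (h : ∀ b, b ≠ b0 → b ≠ b1 → F b = 0) : ∑ b, F b = F b0 + F b1 := by
  have key : ∀ b : Fin N, F b = (if b = b0 then F b0 else 0) + (if b = b1 then F b1 else 0) := by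
    intro b
    by_cases h0 : b = b0
    · subst h0; rw [if_pos rfl, if_neg hne, add_zero]
    · by_cases h1 : b = b1
      · subst h1; rw [if_neg h0, if_pos rfl, zero_add]
      · rw [if_neg h0, if_neg h1, add_zero, h b h0 h1]
  rw [Finset.sum_congr rfl (fun b _ => key b), Finset.sum_add_distrib,
    Finset.sum_ite_eq' Finset.univ b0, Finset.sum_ite_eq' Finset.univ b1,
    if_pos (Finset.mem_univ _), if_pos (Finset.mem_univ _)]

/-- value-level entries of Λ -/
private def lamF (a b : ℕ) : ℝ :=
  if b = a + 1 then (-1 : ℝ) ^ a else if a = b + 1 then (-1 : ℝ) ^ (b + 1) else 0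

/-- value-level entries of the inverse of Λ -/
private noncomputable def linF (c d : ℕ) : ℝ :=
  if c % 2 = 0 ∧ d % 2 = 1 ∧ c < d then (-1 : ℝ)^(c/2 + d/2 + 1)
  else if c % 2 = 1 ∧ d % 2 = 0 ∧ d < c then (-1 : ℝ)^(c/2 + d/2)
  else 0

private noncomputable def LinvMat (n : ℕ) : Matrix (Fin (2*n)) (Fin (2*n)) ℝ :=
  fun c d => linF c.val d.val

private noncomputable def Tsum' {n : ℕ} (x : Matrix (Fin n) (Fin n) ℝ) (s : Fin n) (m : ℕ) : ℝ :=
  ∑ b : Fin n, if b.val ≤ m then x s b else 0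

private lemma lambda_mul_linv (n : ℕ) (hn : 1 ≤ n) : LambdaMat n * LinvMat n = 1 := by
  ext i k
  rw [Matrix.mul_apply]
  have hL : ∀ a b : Fin (2*n), LambdaMat n a b = lamF a.val b.val := fun a b => rfl
  have hgoal : (1 : Matrix (Fin (2*n)) (Fin (2*n)) ℝ) i k = if i.val = k.val then 1 else 0 := by
    rw [Matrix.one_apply]
    exact if_congr Fin.ext_iff rfl rfl
  simp only [hL, LinvMat, hgoal]
  have hconv : ∑ j : Fin (2*n), lamF i.val j.val * linF j.val k.val
      = ∑ j ∈ Finset.range (2*n), lamF i.val j * linF j k.val :=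
    Fin.sum_univ_eq_sum_range (fun j => lamF i.val j * linF j k.val) (2*n)
  rw [hconv]
  set iv := i.val with hiv
  set kv := k.val with hkv
  have hi : iv < 2*n := i.isLt
  have hk : kv < 2*n := k.isLt
  by_cases hi0 : iv = 0
  · have key : ∀ j ∈ Finset.range (2*n), lamF iv j * linF j kv
        = if j = 1 then lamF iv 1 * linF 1 kv else 0 := by
      intro j _
      by_cases h : j = 1
      · rw [if_pos h, h]
      · rw [if_neg h]
        have : lamF iv j = 0 := by
          simp only [lamF]; rw [if_neg (by omega), if_neg (by omega)]
        rw [this, zero_mul]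
    rw [Finset.sum_congr rfl key, Finset.sum_ite_eq' (Finset.range (2*n)) 1,
      if_pos (Finset.mem_range.mpr (by omega))]
    clear key hconv hgoal hL
    simp only [lamF, linF, negOnePow']
    split_ifs <;> (try simp only [true_and, false_and] at *) <;> first | omega | norm_num
  · have key : ∀ j ∈ Finset.range (2*n), lamF iv j * linF j kv
        = (if j = iv + 1 then lamF iv (iv+1) * linF (iv+1) kv else 0)
          + (if j = iv - 1 then lamF iv (iv-1) * linF (iv-1) kv else 0) := by
      intro j _
      by_cases h1 : j = iv + 1
      · rw [if_pos h1, if_neg (by omega), h1, add_zero]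
      · by_cases h2 : j = iv - 1
        · rw [if_neg h1, if_pos h2, h2, zero_add]
        · rw [if_neg h1, if_neg h2]
          have : lamF iv j = 0 := by
            simp only [lamF]; rw [if_neg (by omega), if_neg (by omega)]
          rw [this, zero_mul]; norm_num
    rw [Finset.sum_congr rfl key, Finset.sum_add_distrib,
      Finset.sum_ite_eq' (Finset.range (2*n)) (iv+1),
      Finset.sum_ite_eq' (Finset.range (2*n)) (iv-1),
      if_pos (show iv - 1 ∈ Finset.range (2*n) from Finset.mem_range.mpr (by omega))]
    have l1 : lamF iv (iv+1) = (-1:ℝ)^iv := by simp [lamF]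
    have l2 : lamF iv (iv-1) = (-1:ℝ)^iv := by
      simp only [lamF]; rw [if_neg (by omega), if_pos (by omega)]; congr 1; omega
    rw [l1, l2]
    clear key hconv hgoal hL
    by_cases hitop : iv + 1 < 2*n
    · rw [if_pos (Finset.mem_range.mpr hitop)]
      simp only [linF, negOnePow']
      split_ifs <;> (try simp only [true_and, false_and] at *) <;> first | omega | norm_num
    · rw [if_neg (by simp only [Finset.mem_range]; omega), zero_add]
      simp only [linF, negOnePow']
      split_ifs <;> (try simp only [true_and, false_and] at *) <;> first | omega | norm_num

section mainAux
variable {n : ℕ} (hn : 2 ≤ n) (x : Matrix (Fin n) (Fin n) ℝ)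

private lemma omega_even (r a : Fin n) (h : 2*a.val < 2*n) :
    OmegaMat n x r ⟨2*a.val, h⟩ = (-1:ℝ)^(r.val+a.val) * x r a := by
  have h3 : (2*a.val)/2 = a.val := by omega
  simp only [OmegaMat]
  rw [if_pos (show (2*a.val) % 2 = 0 by omega)]
  simp only [h3, Fin.eta]

private lemma omega_odd_ne (r a : Fin n) (hr : r.val ≠ 0) (h : 2*a.val+1 < 2*n) :
    OmegaMat n x r ⟨2*a.val+1, h⟩
      = if a.val = r.val - 1 ∨ a.val = r.val then (1:ℝ) else 0 := by
  simp only [OmegaMat]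
  rw [if_neg (show ¬((2*a.val+1) % 2 = 0) by omega), if_neg hr]
  have := r.isLt
  by_cases hb : a.val = r.val - 1 ∨ a.val = r.val
  · rw [if_pos (show 2*a.val+1 = 2*r.val-1 ∨ 2*a.val+1 = 2*r.val+1 by omega), if_pos hb]
  · rw [if_neg (show ¬(2*a.val+1 = 2*r.val-1 ∨ 2*a.val+1 = 2*r.val+1) by omega), if_neg hb]

include hn in
private lemma omega_odd_zero (r a : Fin n) (hr : r.val = 0) (h : 2*a.val+1 < 2*n) :
    OmegaMat n x r ⟨2*a.val+1, h⟩
      = (if a.val = 0 then (1:ℝ) else 0) + (if a.val = n-1 then (-1:ℝ)^n else 0) := by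
  simp only [OmegaMat]
  rw [if_neg (show ¬((2*a.val+1) % 2 = 0) by omega), if_pos hr]
  by_cases hb0 : a.val = 0
  · rw [if_pos (show 2*a.val+1 = 1 by omega), if_pos hb0,
      if_neg (show ¬(a.val = n-1) by omega), add_zero]
  · rw [if_neg (show ¬(2*a.val+1 = 1) by omega), if_neg hb0]
    by_cases hb1 : a.val = n-1
    · rw [if_pos (show 2*a.val+1 = 2*n-1 by omega), if_pos hb1, zero_add]
    · rw [if_neg (show ¬(2*a.val+1 = 2*n-1) by omega), if_neg hb1, add_zero]

private lemma myTsum_zero (s : Fin n) (hn' : 0 < n) : Tsum' x s 0 = x s ⟨0, hn'⟩ := by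
  unfold Tsum'
  have key : ∀ b : Fin n, (if b.val ≤ 0 then x s b else 0)
      = if b = ⟨0, hn'⟩ then x s ⟨0, hn'⟩ else 0 := by
    intro b
    by_cases hb : b.val = 0
    · rw [if_pos (by omega), if_pos (Fin.ext hb)]
      congr 1
      exact Fin.ext hb
    · rw [if_neg (by omega), if_neg (fun hh => hb (by rw [hh]))]
  rw [Finset.sum_congr rfl (fun b _ => key b), Finset.sum_ite_eq' Finset.univ,
    if_pos (Finset.mem_univ _)]

private lemma myTsum_succ (s r : Fin n) (hr : r.val ≠ 0) :
    Tsum' x s r.val = Tsum' x s (r.val - 1) + x s r := by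
  unfold Tsum'
  have key : ∀ b : Fin n, (if b.val ≤ r.val then x s b else 0)
      = (if b.val ≤ r.val - 1 then x s b else 0) + (if b = r then x s r else 0) := by
    intro b
    by_cases hb : b.val ≤ r.val - 1
    · rw [if_pos (by omega), if_pos hb, if_neg (fun hh => by
        apply_fun Fin.val at hh; omega), add_zero]
    · by_cases hb2 : b = r
      · subst hb2
        rw [if_pos (by omega), if_neg hb, if_pos rfl, zero_add]
      · have : ¬ b.val ≤ r.val := by
          rcases Nat.lt_or_ge r.val b.val with hc | hc
          · omega
          · intro hc2
            exact hb2 (Fin.ext (by omega))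
        rw [if_neg this, if_neg hb, if_neg hb2, add_zero]
  rw [Finset.sum_congr rfl (fun b _ => key b), Finset.sum_add_distrib,
    Finset.sum_ite_eq' Finset.univ, if_pos (Finset.mem_univ _)]

private lemma myTsum_last (s : Fin n) (hrow : ∑ j, x s j = 0) : Tsum' x s (n-1) = 0 := by
  unfold Tsum'
  rw [← hrow]
  refine Finset.sum_congr rfl fun b _ => ?_
  rw [if_pos (by have := b.isLt; omega)]

include hn in
private lemma LOT_odd (s a : Fin n) (h : 2*a.val+1 < 2*n) :
    (LinvMat n * (OmegaMat n x)ᵀ) ⟨2*a.val+1, h⟩ s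
      = (-1:ℝ)^(a.val+s.val) * Tsum' x s a.val := by
  rw [Matrix.mul_apply]
  rw [sum_fin_two_mul' n (fun d => LinvMat n ⟨2*a.val+1, h⟩ d * (OmegaMat n x)ᵀ d s)]
  have key : ∀ b : Fin n,
      LinvMat n ⟨2*a.val+1, h⟩ ⟨2*b.val, by omega⟩ * (OmegaMat n x)ᵀ ⟨2*b.val, by omega⟩ s
      + LinvMat n ⟨2*a.val+1, h⟩ ⟨2*b.val+1, by omega⟩ * (OmegaMat n x)ᵀ ⟨2*b.val+1, by omega⟩ s
      = (-1:ℝ)^(a.val+s.val) * (if b.val ≤ a.val then x s b else 0) := by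
    intro b
    rw [Matrix.transpose_apply, Matrix.transpose_apply, omega_even x s b (by omega)]
    have hzero : LinvMat n ⟨2*a.val+1, h⟩ ⟨2*b.val+1, by omega⟩ = 0 := by
      simp only [LinvMat, linF]
      rw [if_neg (by omega), if_neg (by omega)]
    rw [hzero, zero_mul, add_zero]
    simp only [LinvMat, linF]
    by_cases hba : b.val ≤ a.val
    · rw [if_neg (by omega), if_pos (by refine ⟨by omega, by omega, by omega⟩), if_pos hba]
      have e1 : (2*a.val+1)/2 = a.val := by omega
      have e2 : (2*b.val)/2 = b.val := by omega
      rw [e1, e2, negOnePow' (a.val + b.val), negOnePow' (s.val + b.val),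
        negOnePow' (a.val + s.val)]
      split_ifs <;> first | omega | ring
    · rw [if_neg (by omega), if_neg (by omega), if_neg hba, zero_mul, mul_zero]
  rw [Finset.sum_congr rfl (fun b _ => key b), ← Finset.mul_sum]
  rfl

include hn in
private lemma LOT_even (s a : Fin n) (h : 2*a.val < 2*n) :
    (LinvMat n * (OmegaMat n x)ᵀ) ⟨2*a.val, h⟩ s
      = if s.val = 0 then ((-1:ℝ)^a.val - if a.val = 0 then 1 else 0)
        else (if a.val = s.val then -1 else 0) := by
  rw [Matrix.mul_apply]
  rw [sum_fin_two_mul' n (fun d => LinvMat n ⟨2*a.val, h⟩ d * (OmegaMat n x)ᵀ d s)]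
  have hzero : ∀ b : Fin n, LinvMat n ⟨2*a.val, h⟩ ⟨2*b.val, by omega⟩ = 0 := by
    intro b; simp only [LinvMat, linF]; rw [if_neg (by omega), if_neg (by omega)]
  have key : ∀ b : Fin n,
      LinvMat n ⟨2*a.val, h⟩ ⟨2*b.val, by omega⟩ * (OmegaMat n x)ᵀ ⟨2*b.val, by omega⟩ s
      + LinvMat n ⟨2*a.val, h⟩ ⟨2*b.val+1, by omega⟩ * (OmegaMat n x)ᵀ ⟨2*b.val+1, by omega⟩ s
      = LinvMat n ⟨2*a.val, h⟩ ⟨2*b.val+1, by omega⟩ * OmegaMat n x s ⟨2*b.val+1, by omega⟩ := by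
    intro b; rw [hzero b, zero_mul, zero_add, Matrix.transpose_apply]
  rw [Finset.sum_congr rfl (fun b _ => key b)]
  set F : Fin n → ℝ := fun b =>
    LinvMat n ⟨2*a.val, h⟩ ⟨2*b.val+1, by omega⟩ * OmegaMat n x s ⟨2*b.val+1, by omega⟩ with hF
  have hlin : ∀ b : Fin n, LinvMat n ⟨2*a.val, h⟩ ⟨2*b.val+1, by omega⟩
      = if a.val ≤ b.val then (-1:ℝ)^(a.val+b.val+1) else 0 := by
    intro b
    simp only [LinvMat, linF]
    have e1 : (2*a.val)/2 = a.val := by omega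
    have e2 : (2*b.val+1)/2 = b.val := by omega
    by_cases hab : a.val ≤ b.val
    · rw [if_pos (by refine ⟨by omega, by omega, by omega⟩), if_pos hab, e1, e2]
    · rw [if_neg (by omega), if_neg (by omega), if_neg hab]
  by_cases hs : s.val = 0
  · have homega : ∀ b : Fin n, OmegaMat n x s ⟨2*b.val+1, by omega⟩
        = (if b.val = 0 then (1:ℝ) else 0) + (if b.val = n-1 then (-1:ℝ)^n else 0) :=
      fun b => omega_odd_zero hn x s b hs (by omega)
    have hcollapse : ∑ b, F b = F ⟨0, by omega⟩ + F ⟨n-1, by omega⟩ := by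
      apply sum_two_point' F ⟨0, by omega⟩ ⟨n-1, by omega⟩
        (by intro hh; apply_fun Fin.val at hh; simp at hh; omega)
      intro b hb0 hb1
      have hv0 : b.val ≠ 0 := fun hh => hb0 (Fin.ext hh)
      have hv1 : b.val ≠ n-1 := fun hh => hb1 (Fin.ext hh)
      rw [hF]; simp only
      rw [homega b, if_neg hv0, if_neg hv1, add_zero, mul_zero]
    rw [hcollapse, hF]; simp only
    rw [homega ⟨0, by omega⟩, homega ⟨n-1, by omega⟩, hlin ⟨0, by omega⟩, hlin ⟨n-1, by omega⟩]
    simp only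
    clear_value F
    clear hcollapse hF key hzero hlin homega F
    rw [if_pos hs, negOnePow' (a.val+0+1), negOnePow' (a.val+(n-1)+1), negOnePow' a.val,
      negOnePow' n]
    split_ifs <;>
      first | omega | norm_num
  · have homega : ∀ b : Fin n, OmegaMat n x s ⟨2*b.val+1, by omega⟩
        = if b.val = s.val - 1 ∨ b.val = s.val then (1:ℝ) else 0 :=
      fun b => omega_odd_ne x s b hs (by omega)
    have hcollapse : ∑ b, F b = F ⟨s.val-1, by omega⟩ + F ⟨s.val, by omega⟩ := by
      apply sum_two_point' F ⟨s.val-1, by omega⟩ ⟨s.val, by omega⟩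
        (by intro hh; apply_fun Fin.val at hh; simp at hh; omega)
      intro b hb0 hb1
      have hv0 : b.val ≠ s.val - 1 := fun hh => hb0 (Fin.ext hh)
      have hv1 : b.val ≠ s.val := fun hh => hb1 (Fin.ext hh)
      rw [hF]; simp only
      rw [homega b, if_neg (by omega), mul_zero]
    rw [hcollapse, hF]; simp only
    rw [homega ⟨s.val-1, by omega⟩, homega ⟨s.val, by omega⟩,
      hlin ⟨s.val-1, by omega⟩, hlin ⟨s.val, by omega⟩]
    simp only
    clear_value F
    clear hcollapse hF key hzero hlin homega F
    rw [if_neg hs, negOnePow' (a.val+(s.val-1)+1), negOnePow' (a.val+s.val+1)]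
    split_ifs <;> (try simp_all only [true_or, or_true, not_true_eq_false]) <;>
      first | omega | norm_num
end mainAux

theorem omega_isotropic (n : ℕ) (hn : 2 ≤ n) (x : Matrix (Fin n) (Fin n) ℝ)
    (hsymm : x.IsSymm) (hrow : ∀ i, ∑ j, x i j = 0) :
    IsUnit (LambdaMat n) ∧ OmegaMat n x * (LambdaMat n)⁻¹ * (OmegaMat n x)ᵀ = 0 := by
  have hn1 : 1 ≤ n := by omega
  have h1 : LambdaMat n * LinvMat n = 1 := lambda_mul_linv n hn1
  have hunit : IsUnit (LambdaMat n) :=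
    ⟨⟨LambdaMat n, LinvMat n, h1, mul_eq_one_comm.mp h1⟩, rfl⟩
  refine ⟨hunit, ?_⟩
  rw [Matrix.inv_eq_right_inv h1, Matrix.mul_assoc]
  ext r s
  rw [Matrix.mul_apply, Matrix.zero_apply]
  rw [sum_fin_two_mul' n (fun c => OmegaMat n x r c * (LinvMat n * (OmegaMat n x)ᵀ) c s)]
  rw [Finset.sum_add_distrib]
  have hxs : x s r = x r s := by
    have h := congrFun (congrFun hsymm r) s
    simpa [Matrix.transpose_apply] using h
  have hE : (∑ a : Fin n, OmegaMat n x r ⟨2*a.val, by omega⟩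
        * (LinvMat n * (OmegaMat n x)ᵀ) ⟨2*a.val, by omega⟩ s)
      = -((-1:ℝ)^(r.val+s.val) * x r s) := by
    by_cases hs : s.val = 0
    · have hs' : s = ⟨0, by omega⟩ := Fin.ext hs
      have key : ∀ a : Fin n, OmegaMat n x r ⟨2*a.val, by omega⟩
            * (LinvMat n * (OmegaMat n x)ᵀ) ⟨2*a.val, by omega⟩ s
          = (-1:ℝ)^r.val * x r a
            - (if a = (⟨0, by omega⟩ : Fin n) then (-1:ℝ)^r.val * x r a else 0) := by
        intro a
        rw [LOT_even hn x s a (by omega), omega_even x r a (by omega), if_pos hs]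
        by_cases ha : a.val = 0
        · rw [if_pos ha, if_pos (Fin.ext ha)]
          rw [negOnePow' (r.val+a.val), negOnePow' a.val, negOnePow' r.val]
          split_ifs <;> first | omega | ring
        · rw [if_neg ha, if_neg (fun hh => ha (by rw [hh]))]
          rw [negOnePow' (r.val+a.val), negOnePow' a.val, negOnePow' r.val]
          split_ifs <;> first | omega | ring
      rw [Finset.sum_congr rfl (fun a _ => key a), Finset.sum_sub_distrib,
        Finset.sum_ite_eq' Finset.univ, if_pos (Finset.mem_univ _), ← Finset.mul_sum,
        hrow r, mul_zero, zero_sub]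
      rw [hs']
      norm_num
    · have key : ∀ a : Fin n, OmegaMat n x r ⟨2*a.val, by omega⟩
            * (LinvMat n * (OmegaMat n x)ᵀ) ⟨2*a.val, by omega⟩ s
          = if a = s then -((-1:ℝ)^(r.val+s.val) * x r s) else 0 := by
        intro a
        rw [LOT_even hn x s a (by omega), omega_even x r a (by omega), if_neg hs]
        by_cases ha : a = s
        · subst ha; rw [if_pos rfl, if_pos rfl]; ring
        · rw [if_neg (fun hh => ha (Fin.ext hh)), if_neg ha, mul_zero]
      rw [Finset.sum_congr rfl (fun a _ => key a), Finset.sum_ite_eq' Finset.univ,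
        if_pos (Finset.mem_univ _)]
  have hO : (∑ a : Fin n, OmegaMat n x r ⟨2*a.val+1, by omega⟩
        * (LinvMat n * (OmegaMat n x)ᵀ) ⟨2*a.val+1, by omega⟩ s)
      = (-1:ℝ)^(r.val+s.val) * x s r := by
    have keyT : ∀ a : Fin n, OmegaMat n x r ⟨2*a.val+1, by omega⟩
          * (LinvMat n * (OmegaMat n x)ᵀ) ⟨2*a.val+1, by omega⟩ s
        = OmegaMat n x r ⟨2*a.val+1, by omega⟩ * ((-1:ℝ)^(a.val+s.val) * Tsum' x s a.val) :=
      fun a => by rw [LOT_odd hn x s a (by omega)]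
    rw [Finset.sum_congr rfl (fun a _ => keyT a)]
    set G : Fin n → ℝ := fun a => OmegaMat n x r ⟨2*a.val+1, by omega⟩
        * ((-1:ℝ)^(a.val+s.val) * Tsum' x s a.val) with hG
    by_cases hr : r.val = 0
    · have hr' : r = ⟨0, by omega⟩ := Fin.ext hr
      have hcollapse : ∑ a, G a = G ⟨0, by omega⟩ + G ⟨n-1, by omega⟩ := by
        apply sum_two_point' G ⟨0, by omega⟩ ⟨n-1, by omega⟩
          (by intro hh; apply_fun Fin.val at hh; simp at hh; omega)
        intro a ha0 ha1
        have hv0 : a.val ≠ 0 := fun hh => ha0 (Fin.ext hh)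
        have hv1 : a.val ≠ n-1 := fun hh => ha1 (Fin.ext hh)
        rw [hG]; simp only
        rw [omega_odd_zero hn x r a hr (by omega), if_neg hv0, if_neg hv1, add_zero, zero_mul]
      rw [hcollapse, hG]; simp only
      rw [omega_odd_zero hn x r ⟨0, by omega⟩ hr (by omega),
        omega_odd_zero hn x r ⟨n-1, by omega⟩ hr (by omega)]
      simp only
      rw [if_neg (show ¬((0:ℕ) = n-1) by omega), if_neg (show ¬(n-1 = 0) by omega)]
      simp only [if_true, add_zero, zero_add]
      rw [myTsum_zero x s (by omega), myTsum_last x s (hrow s)]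
      rw [hr']
      norm_num
    · have hcollapse : ∑ a, G a = G ⟨r.val-1, by omega⟩ + G r := by
        apply sum_two_point' G ⟨r.val-1, by omega⟩ r
          (by intro hh; apply_fun Fin.val at hh; simp at hh; omega)
        intro a ha0 ha1
        have hv0 : a.val ≠ r.val - 1 := fun hh => ha0 (Fin.ext hh)
        have hv1 : a.val ≠ r.val := fun hh => ha1 (Fin.ext hh)
        rw [hG]; simp only
        rw [omega_odd_ne x r a hr (by omega), if_neg (by omega), zero_mul]
      rw [hcollapse, hG]; simp only
      rw [omega_odd_ne x r ⟨r.val-1, by omega⟩ hr (by omega),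
        omega_odd_ne x r r hr (by omega)]
      simp only
      simp only [eq_self_iff_true, true_or, or_true, if_true, one_mul]
      rw [myTsum_succ x s r hr]
      have hp : (-1:ℝ)^(r.val-1+s.val) = -(-1:ℝ)^(r.val+s.val) := by
        rw [negOnePow' (r.val-1+s.val), negOnePow' (r.val+s.val)]
        split_ifs <;> first | omega | norm_num
      rw [hp]
      ring
  rw [hE, hO, hxs]
  ring
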